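/- The monoid M_n (n ≥ 1) is 0-simple: its only two-sided ideals are {0} and M_n itself. Equivalently, for every nonzero element w ∈ M_n, the ideal M_n w M_n equals M_n. -/

import Mathlib

inductive Letter | a | b | c | d | z
deriving DecidableEq

abbrev W := FreeMonoid Letter
def A : W := FreeMonoid.of .a
def B : W := FreeMonoid.of .b
def C : W := FreeMonoid.of .c
def D : W := FreeMonoid.of .d
def Z : W := FreeMonoid.of .z

/-- The defining relations of `M n`, with the zero realized by the letter `z`. -/
def relM (n : ℕ) : W → W → Prop := fun x y =>
  (x = A ^ n * B ∧ y = Z) ∨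
  (x = A * C ∧ y = 1) ∨ (x = D * B ∧ y = 1) ∨ (x = D * C ∧ y = 1) ∨
  (∃ k, 1 ≤ k ∧ k ≤ n - 1 ∧ x = D * A ^ k * B ∧ y = 1) ∨
  (∃ l : Letter, x = FreeMonoid.of l * Z ∧ y = Z) ∨
  (∃ l : Letter, x = Z * FreeMonoid.of l ∧ y = Z)

def Mcon (n : ℕ) : Con W := conGen (relM n)

/-- The monoid `M n = Mon⟨a,b,c,d : aⁿb=0, ac=1, db=1, dc=1, daᵏb=1 (1 ≤ k ≤ n-1)⟩`. -/
abbrev M (n : ℕ) := (Mcon n).Quotient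

namespace Aux

/-! ### A concrete model: partial maps on stacks, used to show `Z ≠ 1`. -/

abbrev St := List (Option ℕ)

def fa (n : ℕ) : Function.End (Option St) := fun s =>
  match s with
  | none => none
  | some [] => none
  | some (none :: t) => some t
  | some (some k :: t) => if k + 1 < n then some (some (k + 1) :: t) else none

def fb : Function.End (Option St) := fun s =>
  match s with
  | none => none
  | some t => some (some 0 :: t)

def fc : Function.End (Option St) := fun s =>
  match s with
  | none => none
  | some t => some (none :: t)

def fd : Function.End (Option St) := fun s =>
  match s with
  | none => none
  | some [] => none
  | some (_ :: t) => some t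

def act (n : ℕ) : Letter → Function.End (Option St)
  | .a => fa n
  | .b => fb
  | .c => fc
  | .d => fd
  | .z => fun _ => none

def φ (n : ℕ) : W →* Function.End (Option St) := FreeMonoid.lift (act n)

lemma fa_none (n m : ℕ) : ((fa n) ^ m : Function.End (Option St)) none = none := by
  induction m with
  | zero => rfl
  | succ m ih =>
    rw [pow_succ']
    show fa n (((fa n) ^ m : Function.End (Option St)) none) = none
    rw [ih]
    rfl

lemma fa_pow (n : ℕ) : ∀ (m k : ℕ) (t : St), k + m < n →
    ((fa n) ^ m : Function.End (Option St)) (some (some k :: t)) = some (some (k + m) :: t) := by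
  intro m
  induction m with
  | zero => intro k t _; rfl
  | succ m ih =>
    intro k t h
    rw [pow_succ]
    show ((fa n) ^ m : Function.End (Option St)) (fa n (some (some k :: t))) = _
    have h1 : k + 1 < n := by omega
    have : fa n (some (some k :: t)) = some (some (k + 1) :: t) := by
      simp [fa, h1]
    rw [this, ih (k + 1) t (by omega)]
    have e : k + 1 + m = k + (m + 1) := by omega
    rw [e]

lemma act_none (n : ℕ) (l : Letter) : act n l none = none := by
  cases l <;> rfl

lemma phi_A (n : ℕ) : φ n A = fa n := rfl
lemma phi_B (n : ℕ) : φ n B = fb := rfl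
lemma phi_C (n : ℕ) : φ n C = fc := rfl
lemma phi_D (n : ℕ) : φ n D = fd := rfl
lemma phi_Z (n : ℕ) : φ n Z = (fun _ => none) := rfl

lemma rel_sound (n : ℕ) (hn : 1 ≤ n) : ∀ x y, relM n x y → φ n x = φ n y := by
  intro x y h
  rcases h with ⟨hx, hy⟩ | ⟨hx, hy⟩ | ⟨hx, hy⟩ | ⟨hx, hy⟩ |
    ⟨k, hk1, hk2, hx, hy⟩ | ⟨l, hx, hy⟩ | ⟨l, hx, hy⟩ <;> subst hx <;> subst hy <;>
    simp only [map_mul, map_pow, phi_A, phi_B, phi_C, phi_D, phi_Z] <;> funext s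
  · -- a^n b = z
    show ((fa n) ^ n : Function.End (Option St)) (fb s) = none
    cases s with
    | none => exact fa_none n n
    | some t =>
      obtain ⟨m, rfl⟩ : ∃ m, n = m + 1 := ⟨n - 1, by omega⟩
      show ((fa (m+1)) ^ (m+1) : Function.End (Option St)) (some (some 0 :: t)) = none
      rw [pow_succ']
      show fa (m+1) (((fa (m+1)) ^ m : Function.End (Option St)) (some (some 0 :: t))) = none
      rw [fa_pow (m+1) m 0 t (by omega)]
      simp [fa]
  · -- a c = 1
    show fa n (fc s) = s
    cases s <;> rfl
  · -- d b = 1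
    show fd (fb s) = s
    cases s <;> rfl
  · -- d c = 1
    show fd (fc s) = s
    cases s <;> rfl
  · -- d a^k b = 1
    show fd (((fa n) ^ k : Function.End (Option St)) (fb s)) = s
    cases s with
    | none => rw [show fb none = none from rfl, fa_none]; rfl
    | some t =>
      show fd (((fa n) ^ k : Function.End (Option St)) (some (some 0 :: t))) = some t
      rw [fa_pow n k 0 t (by omega)]
      rfl
  · -- l z = z
    show act n l none = none
    exact act_none n l
  · -- z l = z
    rfl

lemma Z_ne_one (n : ℕ) (hn : 1 ≤ n) : (Z : M n) ≠ 1 := by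
  intro h
  have h1 : Mcon n Z 1 := by
    have := (Con.eq (c := Mcon n) (a := Z) (b := 1)).mp (by simpa using h)
    exact this
  have hle : Mcon n ≤ Con.ker (φ n) := Con.conGen_le.mpr (fun x y hxy =>
    (Con.ker_rel _).mpr (rel_sound n hn x y hxy))
  have h2 : φ n Z = φ n 1 := (Con.ker_rel _).mp (hle h1)
  have h3 : φ n Z (some []) = φ n 1 (some []) := by rw [h2]
  rw [phi_Z, map_one] at h3
  exact nomatch (show (none : Option St) = some [] from h3)

/-! ### Syntactic part: normal forms and 0-simplicity. -/

variable {n : ℕ}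

lemma crel {x y : W} (h : relM n x y) : Mcon n x y := ConGen.Rel.of _ _ h

lemma r_anb : Mcon n (A ^ n * B) Z := crel (Or.inl ⟨rfl, rfl⟩)
lemma r_ac : Mcon n (A * C) 1 := crel (Or.inr (Or.inl ⟨rfl, rfl⟩))
lemma r_db : Mcon n (D * B) 1 := crel (Or.inr (Or.inr (Or.inl ⟨rfl, rfl⟩)))
lemma r_dc : Mcon n (D * C) 1 := crel (Or.inr (Or.inr (Or.inr (Or.inl ⟨rfl, rfl⟩))))
lemma r_dab (k : ℕ) (h1 : 1 ≤ k) (h2 : k ≤ n - 1) : Mcon n (D * A ^ k * B) 1 :=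
  crel (Or.inr (Or.inr (Or.inr (Or.inr (Or.inl ⟨k, h1, h2, rfl, rfl⟩)))))
lemma r_lz (l : Letter) : Mcon n (FreeMonoid.of l * Z) Z :=
  crel (Or.inr (Or.inr (Or.inr (Or.inr (Or.inr (Or.inl ⟨l, rfl, rfl⟩))))))
lemma r_zl (l : Letter) : Mcon n (Z * FreeMonoid.of l) Z :=
  crel (Or.inr (Or.inr (Or.inr (Or.inr (Or.inr (Or.inr ⟨l, rfl, rfl⟩))))))

lemma cancel_left {x w : W} (h : Mcon n x 1) : Mcon n (x * w) w := by
  simpa using (Mcon n).mul h ((Mcon n).refl w)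

lemma cancel_mid {u x v : W} (h : Mcon n x 1) : Mcon n (u * x * v) (u * v) := by
  simpa using (Mcon n).mul ((Mcon n).mul ((Mcon n).refl u) h) ((Mcon n).refl v)

/-- push factors: `none ↦ c`, `some k ↦ aᵏ b`. -/
def pfac (n : ℕ) : Option (Fin n) → W
  | none => C
  | some k => A ^ (k : ℕ) * B

def pushw (n : ℕ) (Q : List (Option (Fin n))) : W := (Q.map (pfac n)).prod

def popw (R : List Bool) : W := (R.map (fun b => if b then A else D)).prod

lemma d_pfac (hn : 1 ≤ n) (f : Option (Fin n)) : Mcon n (D * pfac n f) 1 := by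
  cases f with
  | none => exact r_dc
  | some k =>
    rcases Nat.eq_zero_or_pos (k : ℕ) with hk | hk
    · have : pfac n (some k) = B := by simp [pfac, hk]
      rw [this]; exact r_db
    · have : D * pfac n (some k) = D * A ^ (k : ℕ) * B := by
        simp [pfac, mul_assoc]
      rw [this]
      exact r_dab (k : ℕ) hk (by have := k.isLt; omega)

lemma dpow_push (hn : 1 ≤ n) : ∀ Q : List (Option (Fin n)),
    Mcon n (D ^ Q.length * pushw n Q) 1 := by
  intro Q
  induction Q with
  | nil => simp [pushw]; exact (Mcon n).refl 1
  | cons f Q ih =>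
    have e : D ^ (f :: Q).length * pushw n (f :: Q)
        = D ^ Q.length * (D * pfac n f) * pushw n Q := by
      simp [pushw, pow_succ, mul_assoc]
    rw [e]
    exact ((cancel_mid (d_pfac hn f)).trans ih)

lemma pop_c : ∀ R : List Bool, Mcon n (popw R * C ^ R.length) 1 := by
  intro R
  induction R with
  | nil => simp [popw]; exact (Mcon n).refl 1
  | cons x R ih =>
    have e : popw (x :: R) * C ^ (x :: R).length
        = (if x then A else D) * (popw R * C ^ R.length) * C := by
      simp [popw, pow_succ, mul_assoc]
    rw [e]
    refine ((cancel_mid ih).trans ?_)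
    have e2 : (if x then A else D) * (1 : W) * C = (if x then A else D) * C := by
      simp
    cases x
    · simp only [Bool.false_eq_true, ↓reduceIte, mul_one]; exact r_dc
    · simp only [↓reduceIte, mul_one]; exact r_ac

lemma z_mul : ∀ w : W, Mcon n (Z * w) Z := by
  intro w
  induction w using FreeMonoid.inductionOn' with
  | one => simpa using (Mcon n).refl Z
  | of_mul x w ih =>
    have e : Z * (FreeMonoid.of x * w) = (Z * FreeMonoid.of x) * w := by
      rw [mul_assoc]
    rw [e]
    exact ((Mcon n).mul (r_zl x) ((Mcon n).refl w)).trans ih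

lemma step (hn : 1 ≤ n) (l : Letter) (Q : List (Option (Fin n))) (R : List Bool) :
    Mcon n (FreeMonoid.of l * (pushw n Q * popw R)) Z ∨
      ∃ Q' R', Mcon n (FreeMonoid.of l * (pushw n Q * popw R)) (pushw n Q' * popw R') := by
  cases l with
  | z =>
    exact Or.inl (z_mul _)
  | b =>
    refine Or.inr ⟨some ⟨0, hn⟩ :: Q, R, ?_⟩
    have e : FreeMonoid.of Letter.b * (pushw n Q * popw R)
        = pushw n (some ⟨0, hn⟩ :: Q) * popw R := by
      simp [pushw, pfac, B, mul_assoc]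
    rw [e]
    exact (Mcon n).refl _
  | c =>
    refine Or.inr ⟨none :: Q, R, ?_⟩
    have e : FreeMonoid.of Letter.c * (pushw n Q * popw R)
        = pushw n (none :: Q) * popw R := by
      simp [pushw, pfac, C, mul_assoc]
    rw [e]
    exact (Mcon n).refl _
  | d =>
    cases Q with
    | nil =>
      refine Or.inr ⟨[], false :: R, ?_⟩
      have e : FreeMonoid.of Letter.d * (pushw n ([] : List (Option (Fin n))) * popw R)
          = pushw n ([] : List (Option (Fin n))) * popw (false :: R) := by
        simp [pushw, popw, D, mul_assoc]
      rw [e]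
      exact (Mcon n).refl _
    | cons f Q₂ =>
      refine Or.inr ⟨Q₂, R, ?_⟩
      have e : FreeMonoid.of Letter.d * (pushw n (f :: Q₂) * popw R)
          = (D * pfac n f) * (pushw n Q₂ * popw R) := by
        simp [pushw, D, mul_assoc]
      rw [e]
      exact cancel_left (d_pfac hn f)
  | a =>
    cases Q with
    | nil =>
      refine Or.inr ⟨[], true :: R, ?_⟩
      have e : FreeMonoid.of Letter.a * (pushw n ([] : List (Option (Fin n))) * popw R)
          = pushw n ([] : List (Option (Fin n))) * popw (true :: R) := by
        simp [pushw, popw, A, mul_assoc]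
      rw [e]
      exact (Mcon n).refl _
    | cons f Q₂ =>
      cases f with
      | none =>
        refine Or.inr ⟨Q₂, R, ?_⟩
        have e : FreeMonoid.of Letter.a * (pushw n (none :: Q₂) * popw R)
            = (A * C) * (pushw n Q₂ * popw R) := by
          simp [pushw, pfac, A, mul_assoc]
        rw [e]
        exact cancel_left r_ac
      | some k =>
        by_cases h : (k : ℕ) + 1 < n
        · refine Or.inr ⟨some ⟨(k : ℕ) + 1, h⟩ :: Q₂, R, ?_⟩
          have e : FreeMonoid.of Letter.a * (pushw n (some k :: Q₂) * popw R)
              = pushw n (some ⟨(k : ℕ) + 1, h⟩ :: Q₂) * popw R := by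
            simp [pushw, pfac, A, pow_succ', mul_assoc]
          rw [e]; exact (Mcon n).refl _
        · have hk : (k : ℕ) + 1 = n := by have := k.isLt; omega
          refine Or.inl ?_
          have e : FreeMonoid.of Letter.a * (pushw n (some k :: Q₂) * popw R)
              = (A ^ ((k : ℕ) + 1) * B) * (pushw n Q₂ * popw R) := by
            simp [pushw, pfac, A, pow_succ', mul_assoc]
          rw [e, hk]
          exact ((Mcon n).mul r_anb ((Mcon n).refl _)).trans (z_mul _)

lemma nf (hn : 1 ≤ n) : ∀ w : W,
    Mcon n w Z ∨ ∃ Q R, Mcon n w (pushw n Q * popw R) := by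
  intro w
  induction w using FreeMonoid.inductionOn' with
  | one =>
    refine Or.inr ⟨[], [], ?_⟩
    simp [pushw, popw]
    exact (Mcon n).refl 1
  | of_mul l w ih =>
    rcases ih with hz | ⟨Q, R, h⟩
    · refine Or.inl ?_
      exact (((Mcon n).mul ((Mcon n).refl (FreeMonoid.of l)) hz).trans (r_lz l))
    · have h2 : Mcon n (FreeMonoid.of l * w) (FreeMonoid.of l * (pushw n Q * popw R)) :=
        (Mcon n).mul ((Mcon n).refl _) h
      rcases step hn l Q R with h3 | ⟨Q', R', h3⟩
      · exact Or.inl (h2.trans h3)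
      · exact Or.inr ⟨Q', R', h2.trans h3⟩

end Aux

/-- `M n` is `0`-simple: it is nontrivial and for every nonzero `w` the
two-sided ideal `M w M` is all of `M`. -/
theorem stmt4 (n : ℕ) (hn : 1 ≤ n) :
    (Z : M n) ≠ 1 ∧
      ∀ w : M n, w ≠ (Z : M n) → ∀ x : M n, ∃ u v : M n, u * w * v = x := by
  constructor
  · exact Aux.Z_ne_one n hn
  · intro w hw x
    induction w using Con.induction_on with
    | H w₀ =>
      rcases Aux.nf hn w₀ with hz | ⟨Q, R, h⟩
      · exact absurd (((Mcon n).eq).mpr hz) hw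
      · refine ⟨x * ↑(D ^ Q.length), ↑(C ^ R.length), ?_⟩
        have key : ((D ^ Q.length : W) : M n) * ↑w₀ * ↑(C ^ R.length) = 1 := by
          rw [← Con.coe_mul, ← Con.coe_mul, ← Con.coe_one]
          refine ((Mcon n).eq).mpr ?_
          have h1 : Mcon n (D ^ Q.length * w₀ * C ^ R.length)
              (D ^ Q.length * (Aux.pushw n Q * Aux.popw R) * C ^ R.length) :=
            (Mcon n).mul ((Mcon n).mul ((Mcon n).refl _) h) ((Mcon n).refl _)
          refine h1.trans ?_
          have e : D ^ Q.length * (Aux.pushw n Q * Aux.popw R) * C ^ R.length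
              = (D ^ Q.length * Aux.pushw n Q) * (Aux.popw R * C ^ R.length) := by
            simp [mul_assoc]
          rw [e]
          have := (Mcon n).mul (Aux.dpow_push hn Q) (Aux.pop_c R)
          rw [mul_one] at this; exact this
        calc x * ↑(D ^ Q.length) * ↑w₀ * ↑(C ^ R.length)
            = x * (↑(D ^ Q.length) * ↑w₀ * ↑(C ^ R.length)) := by
              rw [mul_assoc, mul_assoc, mul_assoc]
          _ = x * 1 := by rw [key]
          _ = x := mul_one x
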